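/- Let (X, m₁) and (Y, m₂) be σ-finite measure spaces and let h : X → Y be a measurable equivalence. Let J : X → (0,∞) be measurable with m₂ equal to the pushforward under h of the measure J·m₁. Let ρ₁ : X → [0,∞) and ρ₂ : Y → (0,∞) be measurable, let τ_α > 0, and let τ_β : Y → [0,∞) be measurable and satisfy τ_β(h x)·ρ₂(h x) = τ_α·ρ₁(x)/J(x) for all x ∈ X. Define Θ : X × ℝ → Y × ℝ by Θ(x, t) = (h x, (τ_β(h x)/τ_α)·t). Then the pushforward under Θ of the product measure (ρ₁·m₁) ⊗ Leb restricted to {(x,t) : 0 ≤ t ≤ τ_α} equals the product measure (ρ₂·m₂) ⊗ Leb restricted to {(y,s) : 0 ≤ s ≤ τ_β(y)}. -/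

import Mathlib

open MeasureTheory

/-- The change-of-variables computation of Section 5.4 of the paper: the coupling map
`Θ(x,t) = (h x, (τ_β(h x)/τ_α)·t)`, with `h` a measurable equivalence of Jacobian `J`
(i.e. `m₂ = h_*(J·m₁)`) and `τ_β` determined by the consistency rule
`τ_β(h x)·ρ₂(h x) = τ_α·ρ₁(x)/J(x)`, pushes `(ρ₁·m₁) ⊗ Leb` restricted to
`{0 ≤ t ≤ τ_α}` forward to `(ρ₂·m₂) ⊗ Leb` restricted to `{0 ≤ s ≤ τ_β}`. -/
theorem coupling_map_measure_preserving
    {X Y : Type*} [MeasurableSpace X] [MeasurableSpace Y]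
    (m₁ : Measure X) (m₂ : Measure Y) [SigmaFinite m₁] [SigmaFinite m₂]
    (h : X ≃ᵐ Y)
    (J : X → ℝ) (hJmeas : Measurable J) (hJpos : ∀ x, 0 < J x)
    (hm₂ : m₂ = Measure.map h (m₁.withDensity fun x => ENNReal.ofReal (J x)))
    (ρ₁ : X → ℝ) (hρ₁meas : Measurable ρ₁) (hρ₁ : ∀ x, 0 ≤ ρ₁ x)
    (ρ₂ : Y → ℝ) (hρ₂meas : Measurable ρ₂) (hρ₂ : ∀ y, 0 < ρ₂ y)
    (τα : ℝ) (hτα : 0 < τα)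
    (τβ : Y → ℝ) (hτβmeas : Measurable τβ) (hτβ : ∀ y, 0 ≤ τβ y)
    (hcons : ∀ x, τβ (h x) * ρ₂ (h x) = τα * ρ₁ x / J x) :
    Measure.map (fun p : X × ℝ => ((h p.1 : Y), (τβ (h p.1) / τα) * p.2))
        (((m₁.withDensity fun x => ENNReal.ofReal (ρ₁ x)).prod volume).restrict
          {p : X × ℝ | 0 ≤ p.2 ∧ p.2 ≤ τα}) =
      ((m₂.withDensity fun y => ENNReal.ofReal (ρ₂ y)).prod volume).restrict
        {p : Y × ℝ | 0 ≤ p.2 ∧ p.2 ≤ τβ p.1} := by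
  have hT : MeasurableSet {p : Y × ℝ | 0 ≤ p.2 ∧ p.2 ≤ τβ p.1} :=
    (measurableSet_le measurable_const measurable_snd).inter
      (measurableSet_le measurable_snd (hτβmeas.comp measurable_fst))
  have hΘ : Measurable (fun p : X × ℝ => ((h p.1 : Y), (τβ (h p.1) / τα) * p.2)) :=
    (h.measurable.comp measurable_fst).prodMk
      (((hτβmeas.comp (h.measurable.comp measurable_fst)).div_const τα).mul measurable_snd)
  have hset : {p : X × ℝ | 0 ≤ p.2 ∧ p.2 ≤ τα} = (Set.univ : Set X) ×ˢ Set.Icc 0 τα := by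
    ext p; simp [Set.mem_Icc]
  ext s hs
  rw [Measure.map_apply hΘ hs, hset, ← Measure.prod_restrict, Measure.restrict_univ,
      Measure.restrict_apply hs, Measure.prod_apply (hΘ hs), Measure.prod_apply (hs.inter hT)]
  rw [lintegral_withDensity_eq_lintegral_mul _ (hρ₁meas.ennreal_ofReal)
      (measurable_measure_prodMk_left (hΘ hs)),
    lintegral_withDensity_eq_lintegral_mul _ (hρ₂meas.ennreal_ofReal)
      (measurable_measure_prodMk_left (hs.inter hT)),
    hm₂]
  simp only [Pi.mul_apply]
  rw [lintegral_map (f := fun a : Y => ENNReal.ofReal (ρ₂ a) *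
          volume (Prod.mk a ⁻¹' (s ∩ {p : Y × ℝ | 0 ≤ p.2 ∧ p.2 ≤ τβ p.1}))) ((hρ₂meas.ennreal_ofReal).mul
      (measurable_measure_prodMk_left (hs.inter hT))) h.measurable,
    lintegral_withDensity_eq_lintegral_mul _ (hJmeas.ennreal_ofReal)
      (show Measurable fun a : X => ENNReal.ofReal (ρ₂ (h a)) *
          volume (Prod.mk (h a) ⁻¹' (s ∩ {p : Y × ℝ | 0 ≤ p.2 ∧ p.2 ≤ τβ p.1})) from
        ((hρ₂meas.ennreal_ofReal).mul
          (measurable_measure_prodMk_left (hs.inter hT))).comp h.measurable)]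
  refine lintegral_congr fun x => ?_
  simp only [Pi.mul_apply, Function.comp_apply]
  set y := h x with hy
  have hslice : (Prod.mk y ⁻¹' (s ∩ {p : Y × ℝ | 0 ≤ p.2 ∧ p.2 ≤ τβ p.1}))
      = (Prod.mk y ⁻¹' s) ∩ Set.Icc 0 (τβ y) := by
    ext t; simp [Set.mem_Icc, and_assoc]
  rw [hslice]
  by_cases hb : τβ y = 0
  · have hρ₁x : ρ₁ x = 0 := by
      have hcx := hcons x
      rw [← hy, hb, zero_mul, eq_comm, div_eq_zero_iff] at hcx
      rcases hcx with h1 | h1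
      · exact (mul_eq_zero.1 h1).resolve_left (ne_of_gt hτα)
      · exact absurd h1 (ne_of_gt (hJpos x))
    have hzero : volume ((Prod.mk y ⁻¹' s) ∩ Set.Icc 0 (τβ y)) = 0 := by
      refine measure_mono_null (Set.inter_subset_right.trans ?_) (measure_singleton 0)
      rw [hb, Set.Icc_self]
    rw [hρ₁x, hzero]
    simp
  · have hbpos : 0 < τβ y := lt_of_le_of_ne (hτβ y) (Ne.symm hb)
    have hc : 0 < τβ y / τα := div_pos hbpos hτα
    have hpre : (Prod.mk x ⁻¹' ((fun p : X × ℝ => ((h p.1 : Y), (τβ (h p.1) / τα) * p.2)) ⁻¹' s))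
        ∩ Set.Icc 0 τα
        = ((τβ y / τα) * ·) ⁻¹' ((Prod.mk y ⁻¹' s) ∩ Set.Icc 0 (τβ y)) := by
      ext t
      simp only [Set.mem_inter_iff, Set.mem_preimage, Set.mem_Icc, ← hy]
      constructor
      · rintro ⟨hst, h0, h1⟩
        refine ⟨hst, mul_nonneg hc.le h0, ?_⟩
        calc τβ y / τα * t ≤ τβ y / τα * τα := mul_le_mul_of_nonneg_left h1 hc.le
          _ = τβ y := div_mul_cancel₀ _ (ne_of_gt hτα)
      · rintro ⟨hst, h0, h1⟩
        refine ⟨hst, nonneg_of_mul_nonneg_right h0 hc, ?_⟩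
        have h2 : τβ y / τα * t ≤ τβ y / τα * τα := by
          rwa [div_mul_cancel₀ _ (ne_of_gt hτα)]
        exact le_of_mul_le_mul_left h2 hc
    rw [Measure.restrict_apply' measurableSet_Icc, hpre,
      Real.volume_preimage_mul_left (ne_of_gt hc)]
    have key : ρ₁ x * |(τβ y / τα)⁻¹| = J x * ρ₂ y := by
      rw [abs_of_pos (inv_pos.2 hc)]
      have hcx := hcons x
      rw [← hy] at hcx
      have hJ := hJpos x
      field_simp at hcx ⊢
      nlinarith [hρ₂ y]
    rw [← mul_assoc, ← mul_assoc, ← ENNReal.ofReal_mul (hρ₁ x),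
      ← ENNReal.ofReal_mul (hJpos x).le, key]
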